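/- For every real ν with -1 < ν < 0, the integral ∫_0^{π/2} sin((2ν+1)θ)/sin θ dθ equals π/2 + (sin(νπ)/2)·(ψ((ν+2)/2) − ψ((ν+1)/2)), where ψ is the digamma function. -/

import Mathlib

open Real

/-- The digamma function: the logarithmic derivative of the Gamma function. -/
noncomputable def digamma (x : ℝ) : ℝ := deriv (fun y => Real.log (Real.Gamma y)) x

open MeasureTheory Filter Topology Set FourierTransform intervalIntegral

/-! ### Riemann–Lebesgue auxiliary lemma -/

lemma rl_aux (h : ℝ → ℝ) (hi : IntegrableOn h (Set.Ioc 0 (π/2))) :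
    Tendsto (fun c : ℝ => ∫ θ in (0:ℝ)..(π/2), Real.cos (c*θ) * h θ) atTop (𝓝 0) := by
  set f : ℝ → ℂ := Set.indicator (Set.Ioc 0 (π/2)) (fun θ => (h θ : ℂ)) with hf
  have hfint : Integrable f := by
    rw [hf, integrable_indicator_iff measurableSet_Ioc]
    exact hi.ofReal
  have H : Tendsto (fun w : ℝ => ∫ v : ℝ, 𝐞 (-(v * w)) • f v) (cocompact ℝ) (𝓝 0) :=
    Real.tendsto_integral_exp_smul_cocompact f
  have hw : Tendsto (fun c : ℝ => c / (2*π)) atTop (cocompact ℝ) := by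
    rw [cocompact_eq_atBot_atTop]
    exact (tendsto_id.atTop_div_const (by positivity)).mono_right le_sup_right
  have H2 : Tendsto (fun c : ℝ =>
      (∫ v : ℝ, 𝐞 (-(v * (c/(2*π)))) • f v).re) atTop (𝓝 0) := by
    have := (Complex.continuous_re.tendsto 0).comp (H.comp hw)
    exact this
  refine H2.congr fun c => ?_
  have hint2 : Integrable (fun v : ℝ => 𝐞 (-(v * (c/(2*π)))) • f v) := by
    simp_rw [Circle.smul_def, Real.fourierChar_apply]
    refine Integrable.bdd_mul hfint ?_ (c := 1) (Filter.Eventually.of_forall fun v => ?_)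
    · apply Continuous.aestronglyMeasurable
      exact Complex.continuous_exp.comp ((Complex.continuous_ofReal.comp
        (continuous_const.mul ((continuous_id.mul continuous_const).neg))).mul continuous_const)
    · rw [Complex.norm_exp_ofReal_mul_I]
  calc (∫ v : ℝ, 𝐞 (-(v * (c/(2*π)))) • f v).re
      = ∫ v : ℝ, (𝐞 (-(v * (c/(2*π)))) • f v).re := (integral_re hint2).symm
    _ = ∫ v in Set.Ioc (0:ℝ) (π/2), Real.cos (c*v) * h v := by
        rw [← MeasureTheory.integral_indicator measurableSet_Ioc]
        congr 1
        funext v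
        by_cases hv : v ∈ Set.Ioc (0:ℝ) (π/2)
        · rw [hf]
          simp only [Set.indicator_of_mem hv, Circle.smul_def, Real.fourierChar_apply]
          have harg : (2 * π * -(v * (c / (2*π)))) = -(c*v) := by
            field_simp
          rw [harg]
          simp only [smul_eq_mul, Complex.mul_re, Complex.ofReal_re, Complex.ofReal_im,
            mul_zero, sub_zero]
          rw [show ((↑(-(c * v)) : ℂ) * Complex.I) = -(↑c * ↑v * Complex.I) by push_cast; ring]
            at *
          rw [show (Complex.exp (-(↑c * ↑v * Complex.I))).re = Real.cos (-(c*v)) by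
            rw [← Complex.exp_ofReal_mul_I_re]; congr 1; push_cast; ring]
          rw [Real.cos_neg]
        · rw [hf]
          simp [Set.indicator_of_notMem hv]
    _ = ∫ θ in (0:ℝ)..(π/2), Real.cos (c*θ) * h θ := by
        rw [intervalIntegral.integral_of_le (by positivity)]

/-! ### The integral side -/

noncomputable def II (a : ℝ) : ℝ := ∫ θ in (0:ℝ)..(π/2), Real.sin (a*θ) / Real.sin θ

lemma II_integrable (a : ℝ) :
    IntervalIntegrable (fun θ => Real.sin (a*θ) / Real.sin θ) volume 0 (π/2) := by
  rw [intervalIntegrable_iff_integrableOn_Ioc_of_le (by positivity)]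
  apply Integrable.mono' (integrable_const (|a| * (π/2)))
  · apply Measurable.aestronglyMeasurable
    fun_prop
  · filter_upwards [ae_restrict_mem measurableSet_Ioc] with θ hθ
    obtain ⟨hθ0, hθ1⟩ := hθ
    have hs : 2/π * θ ≤ Real.sin θ := Real.mul_le_sin hθ0.le hθ1
    have hspos : 0 < Real.sin θ := lt_of_lt_of_le (by positivity) hs
    rw [Real.norm_eq_abs, abs_div, abs_of_pos hspos, div_le_iff₀ hspos]
    calc |Real.sin (a*θ)| ≤ |a*θ| := Real.abs_sin_le_abs
      _ = |a| * θ := by rw [abs_mul, abs_of_pos hθ0]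
      _ = |a| * (π/2) * (2/π * θ) := by field_simp
      _ ≤ |a| * (π/2) * Real.sin θ := by
          apply mul_le_mul_of_nonneg_left hs (by positivity)

lemma sin_sub_sin' (p q θ : ℝ) :
    Real.sin ((p+q)*θ) - Real.sin ((p-q)*θ) = 2 * Real.cos (p*θ) * Real.sin (q*θ) := by
  have h1 : (p+q)*θ = p*θ + q*θ := by ring
  have h2 : (p-q)*θ = p*θ - q*θ := by ring
  rw [h1, h2, Real.sin_add, Real.sin_sub]
  ring

lemma sin_pos_Ioc {θ : ℝ} (hθ : θ ∈ Set.Ioc 0 (π/2)) : 0 < Real.sin θ :=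
  Real.sin_pos_of_pos_of_lt_pi hθ.1 (lt_of_le_of_lt hθ.2 (by linarith [pi_pos]))

lemma II_diff (p q : ℝ) : II (p+q) - II (p-q) =
    ∫ θ in (0:ℝ)..(π/2), 2 * Real.cos (p*θ) * (Real.sin (q*θ) / Real.sin θ) := by
  rw [II, II, ← intervalIntegral.integral_sub (II_integrable _) (II_integrable _)]
  apply intervalIntegral.integral_congr_ae
  rw [Set.uIoc_of_le (by positivity)]
  filter_upwards with θ hθ
  have hspos : 0 < Real.sin θ := sin_pos_Ioc hθ
  rw [div_sub_div_same, sin_sub_sin' p q θ]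
  field_simp

lemma cos_integral (p : ℝ) (hp : p ≠ 0) :
    ∫ θ in (0:ℝ)..(π/2), 2 * Real.cos (p*θ) = 2 * Real.sin (p*π/2) / p := by
  rw [intervalIntegral.integral_const_mul, intervalIntegral.integral_comp_mul_left Real.cos hp,
    integral_cos]
  rw [mul_zero, Real.sin_zero, sub_zero, smul_eq_mul]
  field_simp

lemma II_rec (p : ℝ) (hp : p ≠ 0) : II (p+1) = II (p-1) + 2 * Real.sin (p*π/2) / p := by
  have h := II_diff p 1
  have h2 : (∫ θ in (0:ℝ)..(π/2), 2 * Real.cos (p*θ) * (Real.sin (1*θ) / Real.sin θ))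
      = ∫ θ in (0:ℝ)..(π/2), 2 * Real.cos (p*θ) := by
    apply intervalIntegral.integral_congr_ae
    rw [Set.uIoc_of_le (by positivity)]
    filter_upwards with θ hθ
    rw [one_mul, div_self (sin_pos_Ioc hθ).ne', mul_one]
  rw [h2, cos_integral p hp] at h
  linarith

lemma II_one : II 1 = π/2 := by
  rw [II]
  calc (∫ θ in (0:ℝ)..(π/2), Real.sin (1*θ) / Real.sin θ)
      = ∫ θ in (0:ℝ)..(π/2), (1:ℝ) := by
        apply intervalIntegral.integral_congr_ae
        rw [Set.uIoc_of_le (by positivity)]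
        filter_upwards with θ hθ
        rw [one_mul, div_self (sin_pos_Ioc hθ).ne']
    _ = π/2 := by simp

lemma II_odd (n : ℕ) : II (2*n+1) = π/2 := by
  induction n with
  | zero => simpa using II_one
  | succ n ih =>
    have hp : ((2*n+2 : ℝ)) ≠ 0 := by positivity
    have h := II_rec (2*n+2) hp
    have e1 : (2*n+2 : ℝ) + 1 = 2*(n+1 : ℕ) + 1 := by push_cast; ring
    have e2 : (2*n+2 : ℝ) - 1 = 2*(n : ℕ) + 1 := by push_cast; ring
    have e3 : Real.sin ((2*n+2)*π/2) = 0 := by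
      rw [show (2*(n:ℝ)+2)*π/2 = (n+1 : ℕ)*π by push_cast; ring]
      exact Real.sin_nat_mul_pi (n+1)
    rw [e1, e2, e3] at h
    simp only [h, ih]
    ring

/-! ### The digamma side -/

lemma differentiable_logGamma {x : ℝ} (hx : 0 < x) :
    DifferentiableAt ℝ (fun y => Real.log (Real.Gamma y)) x :=
  (Real.differentiableAt_Gamma fun m =>
    ((neg_nonpos.mpr m.cast_nonneg).trans_lt hx).ne').log (Real.Gamma_pos_of_pos hx).ne'

lemma digamma_rec {x : ℝ} (hx : 0 < x) : digamma (x + 1) = digamma x + 1 / x := by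
  rw [digamma, digamma, ← deriv_comp_add_const (fun y => Real.log (Real.Gamma y)) 1]
  have heq : (fun y => Real.log (Real.Gamma (y + 1)))
      =ᶠ[𝓝 x] fun y => Real.log y + Real.log (Real.Gamma y) := by
    filter_upwards [eventually_gt_nhds hx] with y hy
    rw [Real.Gamma_add_one hy.ne', Real.log_mul hy.ne' (Real.Gamma_pos_of_pos hy).ne']
  rw [heq.deriv_eq, deriv_fun_add (Real.differentiableAt_log hx.ne') (differentiable_logGamma hx),
    Real.deriv_log, one_div, add_comm]

lemma digamma_mono : MonotoneOn digamma (Set.Ioi 0) := by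
  have h := Real.convexOn_log_Gamma.monotoneOn_deriv
    (fun x hx => by
      rw [Function.comp_def]
      exact differentiable_logGamma hx)
  rw [Function.comp_def] at h
  exact h

noncomputable def DD (y : ℝ) : ℝ := digamma ((y+1)/2) - digamma (y/2)

lemma DD_rec {y : ℝ} (hy : 0 < y) : DD y + DD (y+1) = 2/y := by
  have h : digamma (y/2 + 1) = digamma (y/2) + 2/y := by
    rw [digamma_rec (by positivity)]
    congr 1
    rw [one_div_div]
  have e1 : (y+1+1)/2 = y/2 + 1 := by ring
  rw [DD, DD, e1, h]
  ring

lemma DD_nonneg {y : ℝ} (hy : 0 < y) : 0 ≤ DD y := by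
  rw [DD, sub_nonneg]
  exact digamma_mono (by simp [Set.mem_Ioi]; positivity) (by simp [Set.mem_Ioi]; positivity)
    (by linarith)

lemma DD_le {y : ℝ} (hy : 0 < y) : DD y ≤ 2/y := by
  have h := DD_rec hy
  have h2 := DD_nonneg (by linarith : (0:ℝ) < y + 1)
  linarith

lemma DD_tele {x : ℝ} (hx : 0 < x) (K : ℕ) :
    DD x = (∑ k ∈ Finset.range K, (-1:ℝ)^k * (2/(x+k))) + (-1)^K * DD (x+K) := by
  induction K with
  | zero => simp
  | succ K ih =>
    have hyk : (0:ℝ) < x + K := by positivity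
    have h := DD_rec hyk
    have e : (x + (K+1:ℕ) : ℝ) = (x + K) + 1 := by push_cast; ring
    rw [Finset.sum_range_succ, e]
    have h2 : DD ((x+(K:ℝ))+1) = 2/(x+K) - DD (x+K) := by linarith
    rw [h2, ih]
    push_cast
    ring

lemma DD_limit {x : ℝ} (hx : 0 < x) :
    Tendsto (fun K : ℕ => ∑ k ∈ Finset.range K, (-1:ℝ)^k * (2/(x+k))) atTop (𝓝 (DD x)) := by
  have hg : Tendsto (fun K : ℕ => 2/(x+K)) atTop (𝓝 0) := by
    apply Tendsto.div_atTop tendsto_const_nhds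
    exact tendsto_atTop_add_const_left _ _ tendsto_natCast_atTop_atTop
  have h0 : Tendsto (fun K : ℕ => (-1:ℝ)^K * DD (x+K)) atTop (𝓝 0) := by
    apply squeeze_zero_norm (fun K => ?_) hg
    have hK : (0:ℝ) < x + K := by positivity
    rw [norm_mul, norm_pow, norm_neg, norm_one, one_pow, one_mul,
      Real.norm_eq_abs, abs_of_nonneg (DD_nonneg hK)]
    exact DD_le hK
  have := tendsto_const_nhds.sub h0 (f := fun _ : ℕ => DD x)
  rw [sub_zero] at this
  refine this.congr fun K => ?_
  rw [DD_tele hx K]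
  ring

theorem stmt_0 (ν : ℝ) (h₁ : -1 < ν) (h₂ : ν < 0) :
    ∫ θ in (0:ℝ)..(π/2), Real.sin ((2*ν+1)*θ) / Real.sin θ =
      π/2 + (Real.sin (ν*π) / 2) * (digamma ((ν+2)/2) - digamma ((ν+1)/2)) := by
  have hx : (0:ℝ) < ν + 1 := by linarith
  -- telescoping for the integral
  have tele : ∀ K : ℕ, II (2*ν+1+2*K) =
      II (2*ν+1) - Real.sin (ν*π) * ∑ k ∈ Finset.range K, (-1:ℝ)^k / (ν+1+k) := by
    intro K
    induction K with
    | zero => simp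
    | succ K ih =>
      have hK : (0:ℝ) ≤ (K:ℝ) := Nat.cast_nonneg K
      have hp : (2*ν+2*K+2 : ℝ) ≠ 0 := by nlinarith
      have h := II_rec (2*ν+2*K+2) hp
      have e1 : (2*ν+2*(K:ℝ)+2) + 1 = 2*ν+1+2*((K+1:ℕ):ℝ) := by push_cast; ring
      have e2 : (2*ν+2*(K:ℝ)+2) - 1 = 2*ν+1+2*((K:ℕ):ℝ) := by push_cast; ring
      have e3 : Real.sin ((2*ν+2*K+2)*π/2) = (-1:ℝ)^(K+1) * Real.sin (ν*π) := by
        rw [show (2*ν+2*(K:ℝ)+2)*π/2 = ν*π + ((K+1:ℕ):ℝ)*π by push_cast; ring,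
          Real.sin_add_nat_mul_pi]
      rw [e1, e2, e3] at h
      rw [h, ih, Finset.sum_range_succ]
      have hne : (ν+1+(K:ℝ)) ≠ 0 := by nlinarith
      rw [pow_succ]
      rw [show (2*ν+2*(K:ℝ)+2) = 2*(ν+1+K) by ring]
      field_simp
      ring
  -- Riemann-Lebesgue limit
  have hIoc : IntegrableOn (fun θ => 2 * (Real.sin (ν*θ)/Real.sin θ)) (Set.Ioc 0 (π/2)) := by
    have h := (intervalIntegrable_iff_integrableOn_Ioc_of_le (by positivity)).mp
      (II_integrable ν)
    exact h.const_mul 2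
  have hc : Tendsto (fun K : ℕ => (ν+2*K+1 : ℝ)) atTop atTop := by
    apply tendsto_atTop_add_const_right
    apply tendsto_atTop_add_const_left
    exact (tendsto_natCast_atTop_atTop (R := ℝ)).const_mul_atTop (by norm_num)
  have h2 := (rl_aux _ hIoc).comp hc
  have key : ∀ K : ℕ, II (2*ν+1+2*K) - π/2 =
      ∫ θ in (0:ℝ)..(π/2), Real.cos ((ν+2*K+1)*θ) * (2 * (Real.sin (ν*θ)/Real.sin θ)) := by
    intro K
    have hd := II_diff (ν+2*K+1) ν
    have e1 : (ν+2*(K:ℝ)+1) + ν = 2*ν+1+2*K := by ring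
    have e2 : (ν+2*(K:ℝ)+1) - ν = 2*(K:ℝ)+1 := by ring
    rw [e1, e2, II_odd K] at hd
    rw [hd]
    apply intervalIntegral.integral_congr
    intro θ _
    ring
  have hRL : Tendsto (fun K : ℕ => II (2*ν+1+2*K)) atTop (𝓝 (π/2)) := by
    have h3 : Tendsto (fun K : ℕ => II (2*ν+1+2*K) - π/2) atTop (𝓝 0) :=
      h2.congr fun K => (key K).symm
    have := h3.add (tendsto_const_nhds (x := (π/2 : ℝ)))
    rw [zero_add] at this
    refine this.congr fun K => ?_
    ring
  -- series limit
  have hser : Tendsto (fun K : ℕ => ∑ k ∈ Finset.range K, (-1:ℝ)^k / (ν+1+k)) atTop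
      (𝓝 (DD (ν+1) / 2)) := by
    have h := (DD_limit hx).div_const 2
    refine h.congr fun K => ?_
    rw [Finset.sum_div]
    apply Finset.sum_congr rfl
    intro k _
    ring
  -- combine
  have comb : Tendsto (fun K : ℕ =>
      II (2*ν+1+2*K) + Real.sin (ν*π) * ∑ k ∈ Finset.range K, (-1:ℝ)^k / (ν+1+k)) atTop
      (𝓝 (π/2 + Real.sin (ν*π) * (DD (ν+1) / 2))) :=
    hRL.add (hser.const_mul _)
  have hconst : ∀ K : ℕ, II (2*ν+1+2*K)
      + Real.sin (ν*π) * ∑ k ∈ Finset.range K, (-1:ℝ)^k / (ν+1+k) = II (2*ν+1) := by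
    intro K
    rw [tele K]
    ring
  have hfinal : II (2*ν+1) = π/2 + Real.sin (ν*π) * (DD (ν+1) / 2) :=
    tendsto_nhds_unique tendsto_const_nhds (comb.congr hconst)
  show II (2*ν+1) = _
  rw [hfinal, DD, show (ν+1+1)/2 = (ν+2)/2 by ring]
  ring
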